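/- Gallai-Edmonds edge exclusion: in a bipartite graph G1 with Gallai-Edmonds classes O (odd), E (even), U (unreachable), no maximum matching of G1 contains an edge joining a vertex of O to a vertex of O ∪ U; moreover G1 contains no edge joining a vertex of E to a vertex of E ∪ U. -/

import Mathlib

universe u v

/-- A matching assigns to each person at most one item, injectively on items. -/
def IsMatching {α β : Type*} (M : α → Option β) : Prop :=
  ∀ a a' b, M a = some b → M a' = some b → a = a'

/-- A matching using only edges of the bipartite graph `E`. -/
def IsMatchingOn {α β : Type*} (E : α → β → Prop) (M : α → Option β) : Prop :=
  (∀ a b, M a = some b → E a b) ∧ IsMatching M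

/-- Number of matched people (= number of edges of the matching). -/
noncomputable def msize {α β : Type*} [Fintype α] (M : α → Option β) : ℕ :=
  Nat.card {a // (M a).isSome}

/-- A maximum cardinality matching of the bipartite graph `E`. -/
def IsMaxMatchingOn {α β : Type*} [Fintype α] (E : α → β → Prop) (M : α → Option β) : Prop :=
  IsMatchingOn E M ∧ ∀ M', IsMatchingOn E M' → msize M' ≤ msize M

mutual
  /-- A person reachable from an `M`-unmatched vertex by an even-length alternating path
  (such paths start at an unmatched person). -/
  inductive EvenA {α : Type u} {β : Type v} (E : α → β → Prop) (M : α → Option β) : α → Prop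
    | base (a : α) : M a = none → EvenA E M a
    | step (a : α) (b : β) : OddB E M b → M a = some b → EvenA E M a
  /-- An item reachable from an `M`-unmatched vertex by an odd-length alternating path. -/
  inductive OddB {α : Type u} {β : Type v} (E : α → β → Prop) (M : α → Option β) : β → Prop
    | step (a : α) (b : β) : EvenA E M a → E a b → M a ≠ some b → OddB E M b
end

mutual
  /-- An item reachable from an `M`-unmatched vertex by an even-length alternating path
  (such paths start at an unmatched item). -/
  inductive EvenB {α : Type u} {β : Type v} (E : α → β → Prop) (M : α → Option β) : β → Prop
    | base (b : β) : (∀ a, M a ≠ some b) → EvenB E M b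
    | step (a : α) (b : β) : OddA E M a → M a = some b → EvenB E M b
  /-- A person reachable from an `M`-unmatched vertex by an odd-length alternating path. -/
  inductive OddA {α : Type u} {β : Type v} (E : α → β → Prop) (M : α → Option β) : α → Prop
    | step (a : α) (b : β) : EvenB E M b → E a b → M a ≠ some b → OddA E M a
end

/-- An unreachable person: no alternating path from an unmatched vertex reaches it. -/
def UnreachA {α β : Type*} (E : α → β → Prop) (M : α → Option β) (a : α) : Prop :=
  ¬ EvenA E M a ∧ ¬ OddA E M a

/-- An unreachable item: no alternating path from an unmatched vertex reaches it. -/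
def UnreachB {α β : Type*} (E : α → β → Prop) (M : α → Option β) (b : β) : Prop :=
  ¬ EvenB E M b ∧ ¬ OddB E M b

def EAN {α β : Type*} (E : α → β → Prop) (M : α → Option β) : ℕ → α → Prop
  | 0, a => M a = none
  | n+1, a => M a = none ∨ ∃ b a', M a = some b ∧ EAN E M n a' ∧ E a' b ∧ M a' ≠ some b

def EBN {α β : Type*} (E : α → β → Prop) (M : α → Option β) : ℕ → β → Prop
  | 0, b => ∀ x, M x ≠ some b
  | n+1, b => (∀ x, M x ≠ some b) ∨ ∃ a b', M a = some b ∧ EBN E M n b' ∧ E a b' ∧ M a ≠ some b'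

open Classical in
lemma msize_filter {α β : Type*} [Fintype α] (M : α → Option β) :
    msize M = (Finset.univ.filter (fun a => (M a).isSome)).card := by
  rw [msize, Nat.card_eq_fintype_card]
  convert Fintype.card_subtype _

lemma msize_update_of_none {α β : Type*} [Fintype α] [DecidableEq α] {M : α → Option β}
    {a : α} {b : β} (h : M a = none) :
    msize (Function.update M a (some b)) = msize M + 1 := by
  classical
  rw [msize_filter, msize_filter]
  have hset : (Finset.univ.filter fun x => ((Function.update M a (some b)) x).isSome)
      = insert a (Finset.univ.filter fun x => (M x).isSome) := by
    ext x
    rcases eq_or_ne x a with rfl | hx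
    · simp [Function.update_apply, h]
    · simp [Function.update_apply, hx]
  rw [hset, Finset.card_insert_of_notMem (by simp [h])]

lemma msize_update_of_some {α β : Type*} [Fintype α] [DecidableEq α] {M : α → Option β}
    {a : α} {b b0 : β} (h : M a = some b0) :
    msize (Function.update M a (some b)) = msize M := by
  classical
  rw [msize_filter, msize_filter]
  congr 1
  ext x
  rcases eq_or_ne x a with rfl | hx
  · simp [Function.update_apply, h]
  · simp [Function.update_apply, hx]

lemma msize_update2 {α β : Type*} [Fintype α] [DecidableEq α] {M : α → Option β}
    {a a0 : α} {b : β} (ha : M a = none) (ha0 : M a0 = some b) :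
    msize (Function.update (Function.update M a (some b)) a0 none) = msize M := by
  classical
  have haa0 : a ≠ a0 := by rintro rfl; rw [ha] at ha0; exact (nomatch ha0)
  rw [msize_filter, msize_filter]
  have hset : (Finset.univ.filter fun x =>
        ((Function.update (Function.update M a (some b)) a0 none) x).isSome)
      = insert a ((Finset.univ.filter fun x => (M x).isSome).erase a0) := by
    ext x
    rcases eq_or_ne x a0 with rfl | hx0
    · simp [Function.update_apply, haa0, Ne.symm haa0]
    · rcases eq_or_ne x a with rfl | hx
      · simp [Function.update_apply, hx0, ha, haa0]
      · simp [Function.update_apply, hx0, hx]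
  rw [hset, Finset.card_insert_of_notMem (by simp [ha]),
    Finset.card_erase_of_mem (by simp [ha0]), Nat.sub_add_cancel]
  exact Finset.card_pos.mpr ⟨a0, by simp [ha0]⟩


lemma evenA_fuel {α β : Type*} {E : α → β → Prop} {M : α → Option β} :
    ∀ {a}, EvenA E M a → ∃ n, EAN E M n a := by
  intro a h
  refine EvenA.rec (motive_1 := fun a _ => ∃ n, EAN E M n a)
    (motive_2 := fun b _ => ∃ n a', EAN E M n a' ∧ E a' b ∧ M a' ≠ some b) ?_ ?_ ?_ h
  · intro a ha; exact ⟨0, ha⟩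
  · rintro a b _ hm ⟨n, a', h1, h2, h3⟩
    exact ⟨n+1, Or.inr ⟨b, a', hm, h1, h2, h3⟩⟩
  · rintro a b _ hE hne ⟨n, hn⟩
    exact ⟨n, a, hn, hE, hne⟩

lemma oddB_fuel {α β : Type*} {E : α → β → Prop} {M : α → Option β} {b : β}
    (h : OddB E M b) : ∃ n a', EAN E M n a' ∧ E a' b ∧ M a' ≠ some b := by
  cases h with
  | step a b hEv hE hne =>
    obtain ⟨n, hn⟩ := evenA_fuel hEv
    exact ⟨n, a, hn, hE, hne⟩

lemma evenB_fuel {α β : Type*} {E : α → β → Prop} {M : α → Option β} :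
    ∀ {b}, EvenB E M b → ∃ n, EBN E M n b := by
  intro b h
  refine EvenB.rec (motive_1 := fun b _ => ∃ n, EBN E M n b)
    (motive_2 := fun a _ => ∃ n b', EBN E M n b' ∧ E a b' ∧ M a ≠ some b') ?_ ?_ ?_ h
  · intro b hb; exact ⟨0, hb⟩
  · rintro a b _ hm ⟨n, b', h1, h2, h3⟩
    exact ⟨n+1, Or.inr ⟨a, b', hm, h1, h2, h3⟩⟩
  · rintro a b _ hE hne ⟨n, hn⟩
    exact ⟨n, b, hn, hE, hne⟩

lemma oddA_fuel {α β : Type*} {E : α → β → Prop} {M : α → Option β} {a : α}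
    (h : OddA E M a) : ∃ n b', EBN E M n b' ∧ E a b' ∧ M a ≠ some b' := by
  cases h with
  | step a b hEv hE hne =>
    obtain ⟨n, hn⟩ := evenB_fuel hEv
    exact ⟨n, b, hn, hE, hne⟩

lemma isMatchingOn_update {α β : Type*} [DecidableEq α] {E : α → β → Prop} {M : α → Option β}
    {a : α} {b : β} (hM : IsMatchingOn E M) (hE : E a b) (hb : ∀ x, M x ≠ some b) :
    IsMatchingOn E (Function.update M a (some b)) := by
  constructor
  · intro x c hx
    rcases eq_or_ne x a with rfl | hxa
    · rw [Function.update_self] at hx; cases hx; exact hE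
    · rw [Function.update_of_ne hxa] at hx; exact hM.1 x c hx
  · intro x y c hx hy
    rcases eq_or_ne x a with hxa | hxa
    · rcases eq_or_ne y a with hya | hya
      · rw [hxa, hya]
      · subst hxa
        rw [Function.update_self] at hx
        rw [Function.update_of_ne hya] at hy
        cases hx; exact absurd hy (hb y)
    · rcases eq_or_ne y a with hya | hya
      · subst hya
        rw [Function.update_self] at hy
        rw [Function.update_of_ne hxa] at hx
        cases hy; exact absurd hx (hb x)
      · rw [Function.update_of_ne hxa] at hx
        rw [Function.update_of_ne hya] at hy
        exact hM.2 x y c hx hy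

/-- Transfer of fueled even-reachability across swapping `a`'s partner to a fresh item. -/
lemma transferA {α β : Type*} [DecidableEq α] {E : α → β → Prop} {M : α → Option β}
    {a : α} {b b0 : β} (hMm : IsMatching M) (ha : M a = some b0) (hb : ∀ x, M x ≠ some b) :
    ∀ n x, EAN E M n x → EAN E (Function.update M a (some b)) n x ∨ ∃ m ≤ n, EAN E M m a := by
  intro n
  induction n with
  | zero =>
    intro x hx
    have hx' : M x = none := hx
    have hxa : x ≠ a := by rintro rfl; rw [ha] at hx'; exact nomatch hx'
    left
    show Function.update M a (some b) x = none
    rw [Function.update_of_ne hxa]; exact hx'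
  | succ n ih =>
    intro x hx
    rcases hx with hnone | ⟨b', a', hm, hfa, hE, hne⟩
    · have hxa : x ≠ a := by rintro rfl; rw [ha] at hnone; exact nomatch hnone
      left
      exact Or.inl (by rw [Function.update_of_ne hxa]; exact hnone)
    · rcases eq_or_ne x a with rfl | hxa
      · exact Or.inr ⟨n+1, le_refl _, Or.inr ⟨b', a', hm, hfa, hE, hne⟩⟩
      · rcases eq_or_ne a' a with rfl | ha'
        · exact Or.inr ⟨n, Nat.le_succ n, hfa⟩
        · rcases ih a' hfa with h1 | ⟨m, hm', h2⟩
          · left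
            exact Or.inr ⟨b', a', by rw [Function.update_of_ne hxa]; exact hm, h1, hE,
              by rw [Function.update_of_ne ha']; exact hne⟩
          · exact Or.inr ⟨m, le_trans hm' (Nat.le_succ n), h2⟩

/-- Berge's lemma, person-side start : an alternating even walk to `a` plus an edge to an
unmatched item yields a bigger matching. -/
lemma main_augA {α β : Type*} [Fintype α] [DecidableEq α] {E : α → β → Prop} :
    ∀ n (M : α → Option β), IsMatchingOn E M → ∀ a, EAN E M n a →
      ∀ b, E a b → (∀ x, M x ≠ some b) →
      ∃ N, IsMatchingOn E N ∧ msize N = msize M + 1 := by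
  intro n
  induction n using Nat.strong_induction_on with
  | _ n ih =>
    intro M hM a hA b hE hb
    have base : M a = none → ∃ N, IsMatchingOn E N ∧ msize N = msize M + 1 := by
      intro h
      exact ⟨Function.update M a (some b), isMatchingOn_update hM hE hb,
        msize_update_of_none h⟩
    match n, hA with
    | 0, hA => exact base hA
    | n+1, Or.inl h => exact base h
    | n+1, Or.inr ⟨b0, a1, hm, hfa, hE1, hne1⟩ =>
      have hbb0 : b ≠ b0 := by rintro rfl; exact hb a hm
      have hM1m : IsMatchingOn E (Function.update M a (some b)) :=
        isMatchingOn_update hM hE hb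
      have hsz : msize (Function.update M a (some b)) = msize M := msize_update_of_some hm
      have hb0 : ∀ x, (Function.update M a (some b)) x ≠ some b0 := by
        intro x hx
        rcases eq_or_ne x a with rfl | hxa
        · rw [Function.update_self] at hx; exact hbb0 (by injection hx)
        · rw [Function.update_of_ne hxa] at hx; exact hxa (hM.2 x a b0 hx hm)
      rcases transferA hM.2 hm hb n a1 hfa with h1 | ⟨m, hmn, h2⟩
      · obtain ⟨N, hN, hNs⟩ :=
          ih n (Nat.lt_succ_self n) (Function.update M a (some b)) hM1m a1 h1 b0 hE1 hb0
        exact ⟨N, hN, by rw [hNs, hsz]⟩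
      · exact ih m (Nat.lt_succ_of_le hmn) M hM a h2 b hE hb

lemma isMatchingOn_update2 {α β : Type*} [DecidableEq α] {E : α → β → Prop} {M : α → Option β}
    {a a0 : α} {b : β} (hM : IsMatchingOn E M) (hE : E a b) (ha : M a = none)
    (ha0 : M a0 = some b) :
    IsMatchingOn E (Function.update (Function.update M a (some b)) a0 none) := by
  have haa0 : a ≠ a0 := by rintro rfl; rw [ha] at ha0; exact nomatch ha0
  constructor
  · intro x c hx
    rcases eq_or_ne x a0 with hx0 | hx0
    · subst hx0; rw [Function.update_self] at hx; exact nomatch hx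
    · rw [Function.update_of_ne hx0] at hx
      rcases eq_or_ne x a with hxa | hxa
      · subst hxa; rw [Function.update_self] at hx; cases hx; exact hE
      · rw [Function.update_of_ne hxa] at hx; exact hM.1 x c hx
  · intro x y c hx hy
    have hval : ∀ z, (Function.update (Function.update M a (some b)) a0 none) z = some c →
        (z = a ∧ c = b) ∨ (z ≠ a ∧ z ≠ a0 ∧ M z = some c) := by
      intro z hz
      rcases eq_or_ne z a0 with hz0 | hz0
      · subst hz0; rw [Function.update_self] at hz; exact nomatch hz
      · rw [Function.update_of_ne hz0] at hz
        rcases eq_or_ne z a with hza | hza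
        · subst hza; rw [Function.update_self] at hz; cases hz; exact Or.inl ⟨rfl, rfl⟩
        · rw [Function.update_of_ne hza] at hz; exact Or.inr ⟨hza, hz0, hz⟩
    rcases hval x hx with ⟨hx1, hx2⟩ | ⟨hx1, hx2, hx3⟩ <;>
      rcases hval y hy with ⟨hy1, hy2⟩ | ⟨hy1, hy2, hy3⟩
    · rw [hx1, hy1]
    · exact absurd (hM.2 y a0 b (hx2 ▸ hy3) ha0) hy2
    · exact absurd (hM.2 x a0 b (hy2 ▸ hx3) ha0) hx2
    · exact hM.2 x y c hx3 hy3

/-- Transfer of fueled item-side even-reachability across moving `b` from `a0` to the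
unmatched person `a`. -/
lemma transferB {α β : Type*} [DecidableEq α] {E : α → β → Prop} {M : α → Option β}
    {a a0 : α} {b : β} (hMm : IsMatching M) (ha : M a = none) (ha0 : M a0 = some b) :
    ∀ n y, EBN E M n y →
      EBN E (Function.update (Function.update M a (some b)) a0 none) n y ∨
      ∃ m ≤ n, EBN E M m b := by
  have haa0 : a ≠ a0 := by rintro rfl; rw [ha] at ha0; exact nomatch ha0
  have hunm : ∀ y, (∀ x, M x ≠ some y) →
      ∀ x, (Function.update (Function.update M a (some b)) a0 none) x ≠ some y := by
    intro y hy x hx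
    have hyb : y ≠ b := by rintro rfl; exact hy a0 ha0
    rcases eq_or_ne x a0 with hx0 | hx0
    · subst hx0; rw [Function.update_self] at hx; exact nomatch hx
    · rw [Function.update_of_ne hx0] at hx
      rcases eq_or_ne x a with hxa | hxa
      · subst hxa; rw [Function.update_self] at hx
        exact hyb (by injection hx with h; exact h.symm)
      · rw [Function.update_of_ne hxa] at hx; exact hy x hx
  intro n
  induction n with
  | zero =>
    intro y hy
    exact Or.inl (hunm y hy)
  | succ n ih =>
    intro y hy
    rcases hy with hbase | ⟨a2, b2, hm2, hf, hE2, hne2⟩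
    · exact Or.inl (Or.inl (hunm y hbase))
    · rcases eq_or_ne y b with rfl | hyb
      · exact Or.inr ⟨n+1, le_refl _, Or.inr ⟨a2, b2, hm2, hf, hE2, hne2⟩⟩
      · have ha2a0 : a2 ≠ a0 := by
          rintro rfl; rw [ha0] at hm2; exact hyb (by injection hm2 with h; exact h.symm)
        have ha2a : a2 ≠ a := by rintro rfl; rw [ha] at hm2; exact nomatch hm2
        rcases eq_or_ne b2 b with rfl | hb2b
        · exact Or.inr ⟨n, Nat.le_succ n, hf⟩
        · rcases ih b2 hf with h1 | ⟨m, hm', h2⟩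
          · left
            refine Or.inr ⟨a2, b2, ?_, h1, hE2, ?_⟩
            · rw [Function.update_of_ne ha2a0, Function.update_of_ne ha2a]; exact hm2
            · rw [Function.update_of_ne ha2a0, Function.update_of_ne ha2a]; exact hne2
          · exact Or.inr ⟨m, le_trans hm' (Nat.le_succ n), h2⟩

/-- Berge's lemma, item-side start. -/
lemma main_augB {α β : Type*} [Fintype α] [DecidableEq α] {E : α → β → Prop} :
    ∀ n (M : α → Option β), IsMatchingOn E M → ∀ b, EBN E M n b →
      ∀ a, E a b → M a = none →
      ∃ N, IsMatchingOn E N ∧ msize N = msize M + 1 := by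
  intro n
  induction n using Nat.strong_induction_on with
  | _ n ih =>
    intro M hM b hB a hE ha
    have base : (∀ x, M x ≠ some b) → ∃ N, IsMatchingOn E N ∧ msize N = msize M + 1 := by
      intro h
      exact ⟨Function.update M a (some b), isMatchingOn_update hM hE h,
        msize_update_of_none ha⟩
    match n, hB with
    | 0, hB => exact base hB
    | n+1, Or.inl h => exact base h
    | n+1, Or.inr ⟨a0, b1, hm0, hf, hE1, hne1⟩ =>
      have hM1m : IsMatchingOn E (Function.update (Function.update M a (some b)) a0 none) :=
        isMatchingOn_update2 hM hE ha hm0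
      have hsz : msize (Function.update (Function.update M a (some b)) a0 none) = msize M :=
        msize_update2 ha hm0
      have ha0 : (Function.update (Function.update M a (some b)) a0 none) a0 = none :=
        Function.update_self _ _ _
      rcases transferB hM.2 ha hm0 n b1 hf with h1 | ⟨m, hmn, h2⟩
      · obtain ⟨N, hN, hNs⟩ :=
          ih n (Nat.lt_succ_self n) _ hM1m b1 h1 a0 hE1 ha0
        exact ⟨N, hN, by rw [hNs, hsz]⟩
      · exact ih m (Nat.lt_succ_of_le hmn) M hM b h2 a hE ha

section Corollaries

variable {α β : Type*} [Fintype α] {E : α → β → Prop} {M : α → Option β}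

/-- For a maximum matching, every `OddB` item is matched. -/
lemma noAugB (hmax : IsMaxMatchingOn E M) {b : β} (h : OddB E M b) : ∃ x, M x = some b := by
  classical
  by_contra hc
  push_neg at hc
  obtain ⟨n, a1, hf, hE, _⟩ := oddB_fuel h
  obtain ⟨N, hN, hNs⟩ := main_augA n M hmax.1 a1 hf b hE hc
  have := hmax.2 N hN
  omega

/-- For a maximum matching, every `OddA` person is matched. -/
lemma noAugA (hmax : IsMaxMatchingOn E M) {a : α} (h : OddA E M a) : M a ≠ none := by
  classical
  intro hnone
  obtain ⟨n, b1, hf, hE, _⟩ := oddA_fuel h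
  obtain ⟨N, hN, hNs⟩ := main_augB n M hmax.1 b1 hf a hE hnone
  have := hmax.2 N hN
  omega

/-- Disjointness of even and odd classes on the person side (for a maximum matching). -/
lemma evenA_not_oddA (hmax : IsMaxMatchingOn E M) {a : α}
    (hEv : EvenA E M a) (hOd : OddA E M a) : False := by
  classical
  obtain ⟨n, hf⟩ := evenA_fuel hEv
  clear hEv
  induction n using Nat.strong_induction_on generalizing a with
  | _ n ih =>
    have hstep : ∀ b0 a1, M a = some b0 → EAN E M (n-1) a1 → E a1 b0 → M a1 ≠ some b0 →
        n ≠ 0 → False := by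
      intro b0 a1 hm hf1 hE1 hne1 hn0
      have hEvB : EvenB E M b0 := EvenB.step a b0 hOd hm
      have hOd1 : OddA E M a1 := OddA.step a1 b0 hEvB hE1 hne1
      exact ih (n-1) (by omega) hOd1 hf1
    have hbase : M a = none → False := by
      intro hnone
      obtain ⟨m, b1, hfb, hE1, _⟩ := oddA_fuel hOd
      obtain ⟨N, hN, hNs⟩ := main_augB m M hmax.1 b1 hfb a hE1 hnone
      have := hmax.2 N hN
      omega
    match n, hf with
    | 0, hf => exact hbase hf
    | n+1, Or.inl h => exact hbase h
    | n+1, Or.inr ⟨b0, a1, hm, hf1, hE1, hne1⟩ =>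
      exact hstep b0 a1 hm hf1 hE1 hne1 (by omega)

/-- Disjointness of even and odd classes on the item side (for a maximum matching). -/
lemma evenB_not_oddB (hmax : IsMaxMatchingOn E M) {b : β}
    (hEv : EvenB E M b) (hOd : OddB E M b) : False := by
  classical
  obtain ⟨n, hf⟩ := evenB_fuel hEv
  clear hEv
  induction n using Nat.strong_induction_on generalizing b with
  | _ n ih =>
    have hstep : ∀ a0 b1, M a0 = some b → EBN E M (n-1) b1 → E a0 b1 → M a0 ≠ some b1 →
        n ≠ 0 → False := by
      intro a0 b1 hm hf1 hE1 hne1 hn0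
      have hEvA : EvenA E M a0 := EvenA.step a0 b hOd hm
      have hOd1 : OddB E M b1 := OddB.step a0 b1 hEvA hE1 hne1
      exact ih (n-1) (by omega) hOd1 hf1
    have hbase : (∀ x, M x ≠ some b) → False := by
      intro hunm
      obtain ⟨m, a1, hfa, hE1, _⟩ := oddB_fuel hOd
      obtain ⟨N, hN, hNs⟩ := main_augA m M hmax.1 a1 hfa b hE1 hunm
      have := hmax.2 N hN
      omega
    match n, hf with
    | 0, hf => exact hbase hf
    | n+1, Or.inl h => exact hbase h
    | n+1, Or.inr ⟨a0, b1, hm, hf1, hE1, hne1⟩ =>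
      exact hstep a0 b1 hm hf1 hE1 hne1 (by omega)

end Corollaries

section EdgeLemmas

variable {α β : Type*} {E : α → β → Prop} {M : α → Option β}

/-- Any edge from an even person goes to an odd item. -/
lemma evenA_edge {a : α} {b : β} (hEv : EvenA E M a) (hE : E a b) : OddB E M b := by
  rcases hEv with ⟨a, hnone⟩ | ⟨a, b', hOdd, hm⟩
  · exact OddB.step a b (EvenA.base a hnone) hE (by rw [hnone]; exact fun h => nomatch h)
  · rcases eq_or_ne b' b with rfl | hbb
    · exact hOdd
    · exact OddB.step a b (EvenA.step a b' hOdd hm) hE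
        (by rw [hm]; exact fun h => hbb (by injection h))

/-- Any edge from an even item goes to an odd person. -/
lemma evenB_edge (hMm : IsMatching M) {a : α} {b : β} (hEv : EvenB E M b) (hE : E a b) :
    OddA E M a := by
  rcases hEv with ⟨b, hunm⟩ | ⟨a', b, hOdd, hm⟩
  · exact OddA.step a b (EvenB.base b hunm) hE (hunm a)
  · rcases eq_or_ne (M a) (some b) with hab | hab
    · have : a = a' := hMm a a' b hab hm
      exact this ▸ hOdd
    · exact OddA.step a b (EvenB.step a' b hOdd hm) hE hab

/-- The partner of a matched even person is odd. -/
lemma evenA_partner {a : α} {b : β} (hEv : EvenA E M a) (hm : M a = some b) :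
    OddB E M b := by
  rcases hEv with ⟨a, hnone⟩ | ⟨a, b', hOdd, hm'⟩
  · rw [hnone] at hm; exact nomatch hm
  · rw [hm'] at hm
    have : b' = b := by injection hm
    exact this ▸ hOdd

/-- The partner of a matched even item is odd. -/
lemma evenB_partner (hMm : IsMatching M) {a : α} {b : β} (hEv : EvenB E M b)
    (hm : M a = some b) : OddA E M a := by
  rcases hEv with ⟨b, hunm⟩ | ⟨a', b, hOdd, hm'⟩
  · exact absurd hm (hunm a)
  · have : a = a' := hMm a a' b hm hm'
    exact this ▸ hOdd

/-- The partner of an unreachable person is an unreachable item. -/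
lemma unreachA_partner (hMm : IsMatching M) {a : α} {b : β} (hU : UnreachA E M a)
    (hm : M a = some b) : UnreachB E M b := by
  constructor
  · intro hEvB
    exact hU.2 (evenB_partner hMm hEvB hm)
  · intro hOdB
    exact hU.1 (EvenA.step a b hOdB hm)

/-- An unreachable item is matched, to an unreachable person. -/
lemma unreachB_partner {b : β} (hU : UnreachB E M b) :
    ∃ a, M a = some b ∧ UnreachA E M a := by
  classical
  by_cases hunm : ∀ x, M x ≠ some b
  · exact absurd (EvenB.base b hunm) hU.1
  · push_neg at hunm
    obtain ⟨a, ha⟩ := hunm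
    refine ⟨a, ha, ?_, ?_⟩
    · intro hEvA
      exact hU.2 (evenA_partner hEvA ha)
    · intro hOdA
      exact hU.1 (EvenB.step a b hOdA ha)

/-- For a maximum matching, every odd item is matched, to an even person. -/
lemma oddB_partner {α β : Type*} [Fintype α] {E : α → β → Prop} {M : α → Option β}
    (hmax : IsMaxMatchingOn E M) {b : β} (h : OddB E M b) :
    ∃ a, M a = some b ∧ EvenA E M a := by
  obtain ⟨x, hx⟩ := noAugB hmax h
  exact ⟨x, hx, EvenA.step x b h hx⟩

end EdgeLemmas


section Counting

variable {α β : Type*} [Fintype α] {E : α → β → Prop} {M0 M : α → Option β}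

lemma counting1 (hM0 : IsMaxMatchingOn E M0) (hM : IsMaxMatchingOn E M) :
    (∀ a, M a = none → EvenA E M0 a) ∧
    (∀ b, OddB E M0 b → ∀ a, M a = some b → EvenA E M0 a) := by
  classical
  have hsz : msize M = msize M0 := le_antisymm (hM0.2 M hM.1) (hM.2 M0 hM0.1)
  set DA := Finset.univ.filter (fun a => EvenA E M0 a) with hDAdef
  set A1 := DA.filter (fun a => (M a).isSome) with hA1def
  set A2 := DA.filter (fun a => (M0 a).isSome) with hA2def
  set U1 := DA.filter (fun a => ¬ (M a).isSome) with hU1def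
  set U2 := DA.filter (fun a => ¬ (M0 a).isSome) with hU2def
  set UM := Finset.univ.filter (fun a => ¬ (M a).isSome) with hUMdef
  set UM0 := Finset.univ.filter (fun a => ¬ (M0 a).isSome) with hUM0def
  have key : ∀ a ∈ A1, ∃ w, (EvenA E M0 w ∧ ∃ b, M a = some b ∧ M0 w = some b) := by
    intro a ha
    rw [hA1def, Finset.mem_filter, hDAdef, Finset.mem_filter] at ha
    obtain ⟨⟨-, hEv⟩, hsome⟩ := ha
    obtain ⟨b, hb⟩ := Option.isSome_iff_exists.mp hsome
    have hOdd : OddB E M0 b := evenA_edge hEv (hM.1.1 a b hb)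
    obtain ⟨w, hw, hwEv⟩ := oddB_partner hM0 hOdd
    exact ⟨w, hwEv, b, hb, hw⟩
  set f : α → α := fun a =>
    if h : ∃ w, (EvenA E M0 w ∧ ∃ b, M a = some b ∧ M0 w = some b) then h.choose else a
    with hfdef
  have fspec : ∀ a ∈ A1, EvenA E M0 (f a) ∧ ∃ b, M a = some b ∧ M0 (f a) = some b := by
    intro a ha
    have h := key a ha
    simp only [hfdef, dif_pos h]
    exact h.choose_spec
  have fmem : ∀ a ∈ A1, f a ∈ A2 := by
    intro a ha
    obtain ⟨hEv, b, hb, hw⟩ := fspec a ha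
    rw [hA2def, Finset.mem_filter, hDAdef, Finset.mem_filter]
    exact ⟨⟨Finset.mem_univ _, hEv⟩, by rw [hw]; rfl⟩
  have finj : ∀ x ∈ A1, ∀ y ∈ A1, f x = f y → x = y := by
    intro x hx y hy hxy
    obtain ⟨-, bx, hbx, hwx⟩ := fspec x hx
    obtain ⟨-, by', hby, hwy⟩ := fspec y hy
    rw [hxy] at hwx
    rw [hwx] at hwy
    have hb : bx = by' := by injection hwy
    exact hM.1.2 x y bx hbx (hb ▸ hby)
  have hcard12 : A1.card ≤ A2.card :=
    Finset.card_le_card_of_injOn f fmem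
      (fun x hx y hy h => finj x (Finset.mem_coe.mp hx) y (Finset.mem_coe.mp hy) h)
  have hsplit1 : A1.card + U1.card = DA.card := by
    rw [hA1def, hU1def]; exact Finset.card_filter_add_card_filter_not _
  have hsplit2 : A2.card + U2.card = DA.card := by
    rw [hA2def, hU2def]; exact Finset.card_filter_add_card_filter_not _
  have hU2eq : U2 = UM0 := by
    ext x
    simp only [hU2def, hUM0def, hDAdef, Finset.mem_filter, Finset.mem_univ, true_and]
    exact ⟨fun h => h.2, fun h => ⟨EvenA.base x (Option.not_isSome_iff_eq_none.mp h), h⟩⟩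
  have htotM : msize M + UM.card = Fintype.card α := by
    rw [msize_filter, hUMdef, ← Finset.card_univ]
    exact Finset.card_filter_add_card_filter_not _
  have htotM0 : msize M0 + UM0.card = Fintype.card α := by
    rw [msize_filter, hUM0def, ← Finset.card_univ]
    exact Finset.card_filter_add_card_filter_not _
  have hUMcard : UM.card = UM0.card := by omega
  have hU1sub : U1 ⊆ UM := by
    intro x hx
    rw [hU1def, Finset.mem_filter] at hx
    rw [hUMdef, Finset.mem_filter]
    exact ⟨Finset.mem_univ _, hx.2⟩
  have hU1le : U1.card ≤ UM.card := Finset.card_le_card hU1sub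
  have hU2card : U2.card = UM0.card := by rw [hU2eq]
  have hU1card : U1.card = UM.card := by omega
  have hA12 : A2.card ≤ A1.card := by omega
  have hU1UM : U1 = UM := Finset.eq_of_subset_of_card_le hU1sub (le_of_eq hU1card.symm)
  constructor
  · intro a hnone
    have haUM : a ∈ UM := by
      rw [hUMdef, Finset.mem_filter]
      exact ⟨Finset.mem_univ _, by rw [hnone]; simp⟩
    rw [← hU1UM, hU1def, Finset.mem_filter, hDAdef, Finset.mem_filter] at haUM
    exact haUM.1.2
  · intro b hOdd a hma
    have hsurj := Finset.surj_on_of_inj_on_of_card_le (s := A1) (t := A2)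
      (fun a _ => f a) (fun a ha => fmem a ha)
      (fun a1 a2 ha1 ha2 h => finj a1 ha1 a2 ha2 h) hA12
    obtain ⟨w, hw, hwEv⟩ := oddB_partner hM0 hOdd
    have hwA2 : w ∈ A2 := by
      rw [hA2def, Finset.mem_filter, hDAdef, Finset.mem_filter]
      exact ⟨⟨Finset.mem_univ _, hwEv⟩, by rw [hw]; rfl⟩
    obtain ⟨a', ha', heq⟩ := hsurj w hwA2
    obtain ⟨-, b', hb', hw'⟩ := fspec a' ha'
    have heq' : w = f a' := heq
    rw [← heq'] at hw'
    rw [hw] at hw'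
    have hbb : b = b' := by injection hw'
    have haa : a' = a := hM.1.2 a' a b (hbb ▸ hb') hma
    rw [← haa]
    rw [hA1def, Finset.mem_filter, hDAdef, Finset.mem_filter] at ha'
    exact ha'.1.2

lemma counting2 (hM0 : IsMaxMatchingOn E M0) (hM : IsMaxMatchingOn E M) :
    ∀ b, UnreachB E M0 b → ∀ a, M a = some b → UnreachA E M0 a := by
  classical
  obtain ⟨hC1b, hC1a⟩ := counting1 hM0 hM
  set UA := Finset.univ.filter (fun a => UnreachA E M0 a) with hUAdef
  have key : ∀ a ∈ UA, ∃ w, (UnreachA E M0 w ∧ ∃ b, M a = some b ∧ M0 w = some b) := by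
    intro a ha
    rw [hUAdef, Finset.mem_filter] at ha
    have hUa := ha.2
    obtain ⟨b, hb⟩ : ∃ b, M a = some b := by
      cases hMa : M a with
      | none => exact absurd (hC1b a hMa) hUa.1
      | some b => exact ⟨b, rfl⟩
    have hUb : UnreachB E M0 b := by
      constructor
      · intro hEvB
        exact hUa.2 (evenB_edge hM0.1.2 hEvB (hM.1.1 a b hb))
      · intro hOdB
        exact hUa.1 (hC1a b hOdB a hb)
    obtain ⟨w, hw, hwU⟩ := unreachB_partner hUb
    exact ⟨w, hwU, b, hb, hw⟩
  set g : α → α := fun a =>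
    if h : ∃ w, (UnreachA E M0 w ∧ ∃ b, M a = some b ∧ M0 w = some b) then h.choose else a
    with hgdef
  have gspec : ∀ a ∈ UA, UnreachA E M0 (g a) ∧ ∃ b, M a = some b ∧ M0 (g a) = some b := by
    intro a ha
    have h := key a ha
    simp only [hgdef, dif_pos h]
    exact h.choose_spec
  have gmem : ∀ a ∈ UA, g a ∈ UA := by
    intro a ha
    rw [hUAdef, Finset.mem_filter]
    exact ⟨Finset.mem_univ _, (gspec a ha).1⟩
  have ginj : ∀ x ∈ UA, ∀ y ∈ UA, g x = g y → x = y := by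
    intro x hx y hy hxy
    obtain ⟨-, bx, hbx, hwx⟩ := gspec x hx
    obtain ⟨-, by', hby, hwy⟩ := gspec y hy
    rw [hxy] at hwx
    rw [hwx] at hwy
    have hb : bx = by' := by injection hwy
    exact hM.1.2 x y bx hbx (hb ▸ hby)
  intro b hUb a hma
  have hsurj := Finset.surj_on_of_inj_on_of_card_le (s := UA) (t := UA)
    (fun a _ => g a) (fun a ha => gmem a ha)
    (fun a1 a2 ha1 ha2 h => ginj a1 ha1 a2 ha2 h) (le_refl _)
  obtain ⟨w, hw, hwU⟩ := unreachB_partner hUb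
  have hwUA : w ∈ UA := by rw [hUAdef, Finset.mem_filter]; exact ⟨Finset.mem_univ _, hwU⟩
  obtain ⟨a', ha', heq⟩ := hsurj w hwUA
  obtain ⟨-, b', hb', hw'⟩ := gspec a' ha'
  have heq' : w = g a' := heq
  rw [← heq'] at hw'
  rw [hw] at hw'
  have hbb : b = b' := by injection hw'
  have haa : a' = a := hM.1.2 a' a b (hbb ▸ hb') hma
  rw [hUAdef, Finset.mem_filter] at ha'
  exact haa ▸ ha'.2

end Counting


/-- Gallai–Edmonds edge exclusion: with classes taken with respect to a maximum matching
`M0`, no maximum matching contains an edge joining an odd vertex to an odd or unreachable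
vertex; moreover the graph has no edge joining an even vertex to an even or unreachable
vertex. -/
theorem gallai_edmonds_edge_exclusion {α β : Type*} [Fintype α]
    (E : α → β → Prop) (M0 : α → Option β) (hM0 : IsMaxMatchingOn E M0) :
    (∀ M, IsMaxMatchingOn E M → ∀ a b, M a = some b →
      ¬ (OddA E M0 a ∧ (OddB E M0 b ∨ UnreachB E M0 b)) ∧
      ¬ (OddB E M0 b ∧ (OddA E M0 a ∨ UnreachA E M0 a))) ∧
    (∀ a b, E a b →
      ¬ (EvenA E M0 a ∧ (EvenB E M0 b ∨ UnreachB E M0 b)) ∧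
      ¬ (EvenB E M0 b ∧ (EvenA E M0 a ∨ UnreachA E M0 a))) := by
  constructor
  · intro M hM a b hab
    obtain ⟨hC1b, hC1a⟩ := counting1 hM0 hM
    constructor
    · rintro ⟨hOa, hOb | hUb⟩
      · exact evenA_not_oddA hM0 (hC1a b hOb a hab) hOa
      · exact (counting2 hM0 hM b hUb a hab).2 hOa
    · rintro ⟨hOb, hOa | hUa⟩
      · exact evenA_not_oddA hM0 (hC1a b hOb a hab) hOa
      · exact hUa.1 (hC1a b hOb a hab)
  · intro a b hE
    constructor
    · rintro ⟨hEv, hEb | hUb⟩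
      · exact evenB_not_oddB hM0 hEb (evenA_edge hEv hE)
      · exact hUb.2 (evenA_edge hEv hE)
    · rintro ⟨hEb, hEa | hUa⟩
      · exact evenA_not_oddA hM0 hEa (evenB_edge hM0.1.2 hEb hE)
      · exact hUa.2 (evenB_edge hM0.1.2 hEb hE)
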